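/- arXiv:0704.2274 — 2 statements merged into one kernel-verified Lean document; each statement's English description precedes it below -/
import Mathlib

section
/- Let V : ℝ → ℝ be continuous with compact support such that the Schrödinger operator -d²/dx² + V on ℝ has an L² eigenfunction u with eigenvalue E: -u'' + V u = E u. Let β > 0 be large enough that β² + E - V(x) > 0 for all x. Define ε⁻¹(x₁,x₂) = (β² + E)/(β² + E - V(x₂)) and ψ(x₁,x₂) = e^{iβx₁} u(x₂). Then (1/ε)Δψ + (β² + E)ψ = 0 on ℝ², and ψ(·, x₂) is square-integrable in x₂ for each x₁; i.e., the operator -(1/ε)Δ admits the embedded eigenvalue β² + E with eigenfunction ψ. -/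
open Complex MeasureTheory

lemma expDeriv (β : ℝ) (c : ℂ) (t : ℝ) :
    deriv (fun t : ℝ => Complex.exp (Complex.I * β * t) * c) t
      = (Complex.I * β) * (Complex.exp (Complex.I * β * t) * c) := by
  have h0 : HasDerivAt (fun t : ℝ => ((t : ℂ))) 1 t := (hasDerivAt_id t).ofReal_comp
  have h1 : HasDerivAt (fun t : ℝ => Complex.I * β * (t : ℂ)) (Complex.I * β) t := by
    simpa using h0.const_mul (Complex.I * β)
  have h2 := (h1.cexp).mul_const c
  rw [h2.deriv]; ring

lemma expDeriv2 (β : ℝ) (c : ℂ) (x : ℝ) :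
    deriv (deriv (fun t : ℝ => Complex.exp (Complex.I * β * t) * c)) x
      = -(β ^ 2 : ℂ) * (Complex.exp (Complex.I * β * x) * c) := by
  have hd : deriv (fun t : ℝ => Complex.exp (Complex.I * β * t) * c)
      = fun t : ℝ => Complex.exp (Complex.I * β * t) * (Complex.I * β * c) := by
    funext t; rw [expDeriv]; ring
  rw [hd, expDeriv]
  have := Complex.I_sq
  ring_nf
  rw [Complex.I_sq]
  ring

lemma uDeriv2 (c : ℂ) (u : ℝ → ℝ) (hu : ContDiff ℝ 2 u) (x : ℝ) :
    deriv (deriv (fun t : ℝ => c * (u t : ℂ))) x = c * ((deriv (deriv u) x : ℝ) : ℂ) := by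
  have hu1 : Differentiable ℝ u := hu.differentiable (by norm_num)
  have hu' : ContDiff ℝ 1 (deriv u) := by
    have h2 : ContDiff ℝ (((1:ℕ):ℕ∞)+1) u := by norm_num; exact hu
    exact (contDiff_succ_iff_deriv.mp h2).2.2
  have hu'1 : Differentiable ℝ (deriv u) := hu'.differentiable (by norm_num)
  have hd : deriv (fun t : ℝ => c * (u t : ℂ)) = fun t : ℝ => c * ((deriv u t : ℝ) : ℂ) := by
    funext t
    exact (((hu1 t).hasDerivAt.ofReal_comp).const_mul c).deriv
  rw [hd]
  exact (((hu'1 x).hasDerivAt.ofReal_comp).const_mul c).deriv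

/-- If `-u'' + Vu = Eu` with `u ∈ L²(ℝ)`, `V` continuous with compact
support, and `β > 0` with `β² + E - V(x) > 0` for all `x`, then with
`ε⁻¹(x) = (β²+E)/(β²+E−V(x₂))` and `ψ(x₁,x₂) = e^{iβx₁}u(x₂)` one has
`(1/ε)Δψ + (β²+E)ψ = 0` on `ℝ²`, and `ψ(x₁,·)` is square integrable: `β²+E` is an
embedded eigenvalue of `−(1/ε)Δ` with eigenfunction `ψ`. -/
theorem stmt3 (V : ℝ → ℝ) (hV : Continuous V) (hVsupp : HasCompactSupport V)
    (u : ℝ → ℝ) (hu : ContDiff ℝ 2 u) (huL2 : MemLp u 2 (volume : Measure ℝ))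
    (E : ℝ) (heig : ∀ x : ℝ, -(deriv (deriv u) x) + V x * u x = E * u x)
    (β : ℝ) (hβ : 0 < β) (hpos : ∀ x : ℝ, 0 < β ^ 2 + E - V x) :
    (∀ x₁ x₂ : ℝ,
      (((β ^ 2 + E) / (β ^ 2 + E - V x₂) : ℝ) : ℂ) *
        (deriv (deriv (fun t : ℝ => Complex.exp (Complex.I * β * t) * (u x₂ : ℂ))) x₁
          + deriv (deriv (fun t : ℝ => Complex.exp (Complex.I * β * x₁) * (u t : ℂ))) x₂)
        + ((β ^ 2 + E : ℝ) : ℂ) * (Complex.exp (Complex.I * β * x₁) * (u x₂ : ℂ)) = 0)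
    ∧ (∀ x₁ : ℝ,
        MemLp (fun x₂ : ℝ => Complex.exp (Complex.I * β * x₁) * (u x₂ : ℂ)) 2
          (volume : Measure ℝ)) := by
  constructor
  · intro x₁ x₂
    rw [expDeriv2, uDeriv2 _ u hu]
    have huu : deriv (deriv u) x₂ = (V x₂ - E) * u x₂ := by
      have := heig x₂; linarith
    rw [huu]
    have hne : ((β ^ 2 + E - V x₂ : ℝ) : ℂ) ≠ 0 := by
      exact_mod_cast (hpos x₂).ne'
    push_cast
    push_cast at hne
    field_simp
    ring
  · intro x₁
    have h1 : MemLp (fun x₂ : ℝ => ((u x₂ : ℝ) : ℂ)) 2 (volume : Measure ℝ) := by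
      exact Complex.ofRealCLM.comp_memLp' huL2
    exact h1.const_mul _
end

section
/- Let w be a C² function on the strip [0,2π] × (-∞, T] satisfying (−Δ − k²)w = 0 for x₂ < −T₀ (for some T₀ < T), the quasi-periodicity w(2π, x₂) = e^{2πiα} w(0, x₂) and ∂₁w(2π,x₂) = e^{2πiα}∂₁w(0,x₂), and suppose that for x₂ < −T₀, w(x₁,x₂) = Σ_{(m+α)² < k²} a_m e^{i(m+α)x₁ − i x₂ sqrt(k² − (m+α)²)} + r(x), with r decaying like O(e^{−δ|x₂|}) together with its first derivatives. If the boundary flux integral ∫₀^{2π} (w ∂₂w̄ − w̄ ∂₂w) dx₁ at x₂ = −R tends to 0 as R → ∞, then a_m = 0 for every m with (m+α)² < k². -/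
open Complex Finset Filter MeasureTheory intervalIntegral

lemma ortho_aux (d : ℤ) : ∫ x in (0:ℝ)..(2*Real.pi),
    Complex.exp ((Complex.I*d)*x) = if d = 0 then (2*Real.pi : ℂ) else 0 := by
  by_cases hd : d = 0
  · simp [hd]
  · have hc : (Complex.I * d) ≠ 0 := by
      simp [Complex.I_ne_zero, Complex.ext_iff]
      exact_mod_cast hd
    rw [integral_exp_mul_complex hc, if_neg hd]
    have : Complex.exp (Complex.I * d * (2*Real.pi)) = 1 := by
      rw [show Complex.I * d * (2*Real.pi) = d * (2*Real.pi*Complex.I) by ring]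
      exact Complex.exp_int_mul_two_pi_mul_I d
    simp [this]

lemma prod_integral_aux (α p q : ℝ) (m n : ℤ) :
    ∫ x in (0:ℝ)..(2*Real.pi),
      Complex.exp (Complex.I * ((((m:ℝ)+α : ℝ) : ℂ) * x + (p:ℂ)))
        * (starRingEnd ℂ) (Complex.exp (Complex.I * ((((n:ℝ)+α : ℝ) : ℂ) * x + (q:ℂ))))
      = if m = n then (2*Real.pi : ℂ) * Complex.exp (Complex.I * ((p:ℂ) - q)) else 0 := by
  have key : ∀ x : ℝ,
      Complex.exp (Complex.I * ((((m:ℝ)+α : ℝ) : ℂ) * x + (p:ℂ)))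
        * (starRingEnd ℂ) (Complex.exp (Complex.I * ((((n:ℝ)+α : ℝ) : ℂ) * x + (q:ℂ))))
      = Complex.exp (Complex.I * ((p:ℂ) - q)) * Complex.exp ((Complex.I*((m-n : ℤ):ℂ))*x) := by
    intro x
    rw [← Complex.exp_conj, ← Complex.exp_add, ← Complex.exp_add]
    congr 1
    simp only [map_mul, Complex.conj_I, map_add, Complex.conj_ofReal, map_ofNat]
    push_cast
    ring
  rw [intervalIntegral.integral_congr (fun x _ => key x),
    intervalIntegral.integral_const_mul, ortho_aux]
  by_cases h : m = n <;> simp [h, sub_eq_zero, mul_comm]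

lemma norm_exp_I_mul_aux (t : ℂ) (ht : t.im = 0) : ‖Complex.exp (Complex.I * t)‖ = 1 := by
  rw [Complex.norm_exp]
  simp [Complex.mul_re, ht]

/-- Let `w` be a C² quasi-periodic solution of `(−Δ−k²)w = 0` in `x₂ < −T₀`
which for `x₂ < −T₀` equals a finite sum of propagating modes
`Σ_{(m+α)²<k²} a_m e^{i(m+α)x₁ − i x₂ √(k²−(m+α)²)}` plus a remainder `r` decaying like
`O(e^{−δ|x₂|})` together with its `x₂`-derivative.  If the boundary flux
`∫₀^{2π}(w ∂₂w̄ − w̄ ∂₂w) dx₁` at `x₂ = −R` tends to `0` as `R → ∞`, then all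
propagating coefficients `a_m` vanish. -/
theorem stmt4 (k α T T₀ δ : ℝ) (hk : 0 < k) (hα : 0 ≤ α ∧ α < 1) (hT : T₀ < T)
    (hδ : 0 < δ)
    (M : Finset ℤ) (hM : ∀ m : ℤ, m ∈ M ↔ ((m : ℝ) + α) ^ 2 < k ^ 2)
    (a : ℤ → ℂ) (w r : ℝ → ℝ → ℂ)
    (hsmooth : ContDiffOn ℝ 2 (fun p : ℝ × ℝ => w p.1 p.2) {p : ℝ × ℝ | p.2 < T})
    (hqp : ∀ x₂ : ℝ, x₂ ≤ T →
      w (2 * Real.pi) x₂ = Complex.exp (2 * Real.pi * Complex.I * α) * w 0 x₂ ∧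
      deriv (fun t : ℝ => w t x₂) (2 * Real.pi)
        = Complex.exp (2 * Real.pi * Complex.I * α) * deriv (fun t : ℝ => w t x₂) 0)
    (hpde : ∀ x₁ x₂ : ℝ, x₂ < -T₀ →
      deriv (deriv (fun t : ℝ => w t x₂)) x₁ + deriv (deriv (fun s : ℝ => w x₁ s)) x₂
        + (k ^ 2 : ℂ) * w x₁ x₂ = 0)
    (hexp : ∀ x₁ x₂ : ℝ, x₂ < -T₀ →
      w x₁ x₂ = (∑ m ∈ M, a m * Complex.exp (Complex.I *
          ((((m : ℝ) + α : ℝ) : ℂ) * x₁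
            - (x₂ : ℂ) * (Real.sqrt (k ^ 2 - ((m : ℝ) + α) ^ 2) : ℝ)))) + r x₁ x₂)
    (hrdecay : ∃ C : ℝ, ∀ x₁ x₂ : ℝ, x₂ < -T₀ →
      ‖r x₁ x₂‖ ≤ C * Real.exp (δ * x₂) ∧
      ‖deriv (fun s : ℝ => r x₁ s) x₂‖ ≤ C * Real.exp (δ * x₂) ∧
      ‖deriv (fun t : ℝ => r t x₂) x₁‖ ≤ C * Real.exp (δ * x₂))
    (hflux : Tendsto (fun R : ℝ =>
        ∫ x₁ in (0:ℝ)..(2 * Real.pi),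
          (w x₁ (-R) * (starRingEnd ℂ) (deriv (fun s : ℝ => w x₁ s) (-R))
            - (starRingEnd ℂ) (w x₁ (-R)) * deriv (fun s : ℝ => w x₁ s) (-R)))
      atTop (nhds 0)) :
    ∀ m ∈ M, a m = 0 := by
  classical
  obtain ⟨C, hC⟩ := hrdecay
  -- notation
  set β : ℤ → ℝ := fun m => Real.sqrt (k ^ 2 - ((m : ℝ) + α) ^ 2) with hβ
  have hβpos : ∀ m ∈ M, 0 < β m := fun m hm =>
    Real.sqrt_pos.2 (by have := (hM m).1 hm; linarith)
  have hβnonneg : ∀ m, 0 ≤ β m := fun m => Real.sqrt_nonneg _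
  have hβle : ∀ m ∈ M, β m ≤ k := by
    intro m hm
    have h1 : k ^ 2 - ((m : ℝ) + α) ^ 2 ≤ k ^ 2 := by nlinarith [sq_nonneg ((m:ℝ)+α)]
    calc β m ≤ Real.sqrt (k ^ 2) := Real.sqrt_le_sqrt h1
      _ = k := Real.sqrt_sq hk.le
  set S : ℝ → ℝ → ℂ := fun x₁ x₂ => ∑ m ∈ M, a m * Complex.exp (Complex.I *
      ((((m : ℝ) + α : ℝ) : ℂ) * x₁ - (x₂ : ℂ) * (β m : ℝ))) with hS
  set S' : ℝ → ℝ → ℂ := fun x₁ x₂ => ∑ m ∈ M, a m * (Complex.exp (Complex.I *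
      ((((m : ℝ) + α : ℝ) : ℂ) * x₁ - (x₂ : ℂ) * (β m : ℝ))) * (Complex.I * (-(β m : ℂ)))) with hS'
  have hexp' : ∀ x₁ x₂ : ℝ, x₂ < -T₀ → w x₁ x₂ = S x₁ x₂ + r x₁ x₂ := hexp
  -- derivative of S in the second variable
  have hSd : ∀ x₁ x₂ : ℝ, HasDerivAt (fun s : ℝ => S x₁ s) (S' x₁ x₂) x₂ := by
    intro x₁ x₂
    apply HasDerivAt.fun_sum
    intro m _
    have hs : HasDerivAt (fun s : ℝ => (s : ℂ)) 1 x₂ := by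
      simpa using (hasDerivAt_id x₂).ofReal_comp
    have h1 : HasDerivAt (fun s : ℝ => Complex.I *
        ((((m : ℝ) + α : ℝ) : ℂ) * x₁ - (s : ℂ) * (β m : ℝ)))
        (Complex.I * -(1 * (β m : ℂ))) x₂ :=
      ((hs.mul_const ((β m : ℝ) : ℂ)).const_sub _).const_mul Complex.I
    have h2 := (h1.cexp).const_mul (a m)
    convert h2 using 1
    · rfl
    ring
  -- differentiability and continuity facts for w
  have hopen : IsOpen {p : ℝ × ℝ | p.2 < T} := isOpen_lt continuous_snd continuous_const
  have hwdiff : ∀ x₁ x₂ : ℝ, x₂ < T → DifferentiableAt ℝ (fun s : ℝ => w x₁ s) x₂ := by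
    intro x₁ x₂ h
    have hmem : ((x₁, x₂) : ℝ × ℝ) ∈ {p : ℝ × ℝ | p.2 < T} := h
    have hfd : DifferentiableAt ℝ (fun p : ℝ × ℝ => w p.1 p.2) (x₁, x₂) :=
      (hsmooth.contDiffAt (hopen.mem_nhds hmem)).differentiableAt (by norm_num)
    exact hfd.comp x₂ ((differentiableAt_const x₁).prodMk differentiableAt_id)
  -- the limit value
  set L : ℂ := ∑ m ∈ M, a m * (starRingEnd ℂ) (a m) *
      (Complex.I * ((β m : ℂ) + (β m : ℂ))) * (2 * Real.pi : ℝ) with hL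
  -- constants for the error bound
  set A : ℝ := ∑ m ∈ M, ‖a m‖ with hA
  have hA0 : 0 ≤ A := Finset.sum_nonneg fun m _ => norm_nonneg _
  set C1 : ℝ := max C 1 with hC1
  have hC11 : 1 ≤ C1 := le_max_right _ _
  have hC10 : 0 ≤ C1 := le_trans zero_le_one hC11
  set K : ℝ := 2 * Real.pi * (2 * (A * C1 + A * k * C1 + C1 * C1)) with hK
  -- norm of the modes is 1
  have hmode : ∀ (x₁ x₂ : ℝ) (m : ℤ),
      ‖Complex.exp (Complex.I * ((((m : ℝ) + α : ℝ) : ℂ) * x₁ - (x₂ : ℂ) * (β m : ℝ)))‖ = 1 := by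
    intro x₁ x₂ m
    apply norm_exp_I_mul_aux
    simp
  have hSbound : ∀ x₁ x₂ : ℝ, ‖S x₁ x₂‖ ≤ A := by
    intro x₁ x₂
    refine le_trans (norm_sum_le _ _) (Finset.sum_le_sum ?_)
    intro m _
    rw [norm_mul, hmode]
    simp
  have hS'bound : ∀ x₁ x₂ : ℝ, ‖S' x₁ x₂‖ ≤ A * k := by
    intro x₁ x₂
    rw [hA, Finset.sum_mul]
    refine le_trans (norm_sum_le _ _) (Finset.sum_le_sum ?_)
    intro m hm
    rw [norm_mul, norm_mul, hmode, one_mul, norm_mul]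
    have : ‖Complex.I‖ * ‖-((β m : ℝ) : ℂ)‖ = β m := by
      rw [Complex.norm_I, one_mul, norm_neg, Complex.norm_real, Real.norm_eq_abs]
      exact _root_.abs_of_nonneg (hβnonneg m)
    rw [this]
    exact mul_le_mul_of_nonneg_left (hβle m hm) (norm_nonneg _)
  -- main claim: eventually F R = L + error with controlled error
  have hmainclaim : ∀ R : ℝ, T₀ < R → -T < R → 0 ≤ R →
      ‖(∫ x₁ in (0:ℝ)..(2 * Real.pi),
          (w x₁ (-R) * (starRingEnd ℂ) (deriv (fun s : ℝ => w x₁ s) (-R))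
            - (starRingEnd ℂ) (w x₁ (-R)) * deriv (fun s : ℝ => w x₁ s) (-R))) - L‖
        ≤ K * Real.exp (δ * (-R)) := by
    intro R hR1 hR2 hR3
    have hRT₀ : -R < -T₀ := by linarith
    have hRT : -R < T := by linarith
    set F : ℝ × ℝ → ℂ := fun p => w p.1 p.2 with hF
    -- continuity of w and its x₂-derivative along the line x₂ = -R
    have hwcont : Continuous (fun x₁ : ℝ => w x₁ (-R)) :=
      hsmooth.continuousOn.comp_continuous
        (continuous_id.prodMk continuous_const) (fun x => hRT)
    have hdF : ∀ x₁ : ℝ, DifferentiableAt ℝ F (x₁, -R) := fun x₁ =>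
      (hsmooth.contDiffAt (hopen.mem_nhds hRT)).differentiableAt two_ne_zero
    have hDeq : ∀ x₁ : ℝ, HasDerivAt (fun s : ℝ => w x₁ s)
        ((fderiv ℝ F (x₁, -R)) (0, 1)) (-R) := fun x₁ =>
      (hdF x₁).hasFDerivAt.comp_hasDerivAt (-R)
        ((hasDerivAt_const _ _).prodMk (hasDerivAt_id _))
    have hDcont : Continuous (fun x₁ : ℝ => deriv (fun s : ℝ => w x₁ s) (-R)) := by
      have h1 : ContinuousOn (fun p => fderiv ℝ F p) {p : ℝ × ℝ | p.2 < T} :=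
        hsmooth.continuousOn_fderiv_of_isOpen hopen one_le_two
      have h2 : Continuous (fun x₁ : ℝ => fderiv ℝ F (x₁, -R)) :=
        h1.comp_continuous (continuous_id.prodMk continuous_const) (fun x => hRT)
      have h3 : Continuous (fun x₁ : ℝ => (fderiv ℝ F (x₁, -R)) ((0:ℝ), (1:ℝ))) :=
        h2.clm_apply continuous_const
      refine h3.congr fun x₁ => ?_
      exact ((hDeq x₁).deriv).symm
    -- continuity of the mode sums
    have hmodecont : ∀ m : ℤ, Continuous (fun x : ℝ => Complex.exp (Complex.I *
        ((((m : ℝ) + α : ℝ) : ℂ) * x - ((-R : ℝ) : ℂ) * (β m : ℝ)))) := by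
      intro m
      exact Complex.continuous_exp.comp (continuous_const.mul
        ((continuous_const.mul Complex.continuous_ofReal).sub continuous_const))
    have hScont : Continuous (fun x₁ : ℝ => S x₁ (-R)) := by
      apply continuous_finset_sum
      intro m _
      exact continuous_const.mul (hmodecont m)
    have hS'cont : Continuous (fun x₁ : ℝ => S' x₁ (-R)) := by
      apply continuous_finset_sum
      intro m _
      exact continuous_const.mul ((hmodecont m).mul continuous_const)
    have hrcont : Continuous (fun x₁ : ℝ => r x₁ (-R)) := by
      have he : (fun x₁ : ℝ => r x₁ (-R)) = fun x₁ => w x₁ (-R) - S x₁ (-R) := by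
        funext x₁; rw [hexp' x₁ (-R) hRT₀]; ring
      rw [he]; exact hwcont.sub hScont
    -- the x₂-derivative of w splits
    have hwder : ∀ x₁ : ℝ, deriv (fun s : ℝ => w x₁ s) (-R)
        = S' x₁ (-R) + deriv (fun s : ℝ => r x₁ s) (-R) := by
      intro x₁
      have hev : (fun s : ℝ => r x₁ s) =ᶠ[nhds (-R)] (fun s => w x₁ s - S x₁ s) := by
        filter_upwards [Iio_mem_nhds hRT₀] with s hs
        rw [hexp' x₁ s hs]; ring
      have h1 : deriv (fun s : ℝ => r x₁ s) (-R)
          = deriv (fun s : ℝ => w x₁ s - S x₁ s) (-R) := hev.deriv_eq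
      rw [h1, deriv_fun_sub (hwdiff x₁ (-R) hRT) (hSd x₁ (-R)).differentiableAt,
        (hSd x₁ (-R)).deriv]
      ring
    have hr'cont : Continuous (fun x₁ : ℝ => deriv (fun s : ℝ => r x₁ s) (-R)) := by
      have he : (fun x₁ : ℝ => deriv (fun s : ℝ => r x₁ s) (-R))
          = fun x₁ => deriv (fun s : ℝ => w x₁ s) (-R) - S' x₁ (-R) := by
        funext x₁; rw [hwder x₁]; ring
      rw [he]; exact hDcont.sub hS'cont
    -- split the integrand
    set G : ℝ → ℂ := fun x₁ =>
      S x₁ (-R) * (starRingEnd ℂ) (deriv (fun s : ℝ => r x₁ s) (-R))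
        + r x₁ (-R) * (starRingEnd ℂ) (S' x₁ (-R))
        + r x₁ (-R) * (starRingEnd ℂ) (deriv (fun s : ℝ => r x₁ s) (-R))
        - (starRingEnd ℂ) (S x₁ (-R)) * deriv (fun s : ℝ => r x₁ s) (-R)
        - (starRingEnd ℂ) (r x₁ (-R)) * S' x₁ (-R)
        - (starRingEnd ℂ) (r x₁ (-R)) * deriv (fun s : ℝ => r x₁ s) (-R) with hG
    set main : ℝ → ℂ := fun x₁ =>
      S x₁ (-R) * (starRingEnd ℂ) (S' x₁ (-R))
        - (starRingEnd ℂ) (S x₁ (-R)) * S' x₁ (-R) with hGmain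
    have hsplit : ∀ x₁ : ℝ,
        w x₁ (-R) * (starRingEnd ℂ) (deriv (fun s : ℝ => w x₁ s) (-R))
          - (starRingEnd ℂ) (w x₁ (-R)) * deriv (fun s : ℝ => w x₁ s) (-R)
        = main x₁ + G x₁ := by
      intro x₁
      rw [hexp' x₁ (-R) hRT₀, hwder x₁, hG, hGmain]
      simp only [map_add]
      ring
    have hmaincont : Continuous main := by
      rw [hGmain]
      exact (hScont.mul (continuous_conj.comp hS'cont)).sub
        ((continuous_conj.comp hScont).mul hS'cont)
    have hGcont : Continuous G := by
      rw [hG]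
      exact (((((hScont.mul (continuous_conj.comp hr'cont)).add
        (hrcont.mul (continuous_conj.comp hS'cont))).add
        (hrcont.mul (continuous_conj.comp hr'cont))).sub
        ((continuous_conj.comp hScont).mul hr'cont)).sub
        ((continuous_conj.comp hrcont).mul hS'cont)).sub
        ((continuous_conj.comp hrcont).mul hr'cont)
    have hsplitint : (∫ x₁ in (0:ℝ)..(2 * Real.pi),
        (w x₁ (-R) * (starRingEnd ℂ) (deriv (fun s : ℝ => w x₁ s) (-R))
          - (starRingEnd ℂ) (w x₁ (-R)) * deriv (fun s : ℝ => w x₁ s) (-R)))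
        = (∫ x₁ in (0:ℝ)..(2 * Real.pi), main x₁)
          + ∫ x₁ in (0:ℝ)..(2 * Real.pi), G x₁ := by
      rw [← intervalIntegral.integral_add (hmaincont.intervalIntegrable _ _)
        (hGcont.intervalIntegrable _ _)]
      exact intervalIntegral.integral_congr fun x _ => hsplit x
    -- compute the main integral
    have hcast : ∀ (m : ℤ) (x : ℝ), Complex.exp (Complex.I *
        ((((m : ℝ) + α : ℝ) : ℂ) * x - ((-R : ℝ) : ℂ) * (β m : ℝ)))
        = Complex.exp (Complex.I * ((((m : ℝ) + α : ℝ) : ℂ) * x + ((R * β m : ℝ) : ℂ))) := by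
      intro m x
      congr 1
      push_cast
      ring
    have hmx : ∀ x : ℝ, main x = ∑ m ∈ M, ∑ n ∈ M,
        (a m * (starRingEnd ℂ) (a n) * (Complex.I * ((β m : ℂ) + (β n : ℂ)))) *
          (Complex.exp (Complex.I * ((((m : ℝ) + α : ℝ) : ℂ) * x + ((R * β m : ℝ) : ℂ)))
            * (starRingEnd ℂ) (Complex.exp (Complex.I *
              ((((n : ℝ) + α : ℝ) : ℂ) * x + ((R * β n : ℝ) : ℂ))))) := by
      intro x
      rw [hGmain]
      simp only [hS, hS']
      simp only [hcast]
      rw [map_sum, map_sum, Finset.sum_mul_sum, Finset.sum_mul_sum]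
      nth_rewrite 2 [Finset.sum_comm]
      rw [← Finset.sum_sub_distrib]
      refine Finset.sum_congr rfl fun m hm => ?_
      rw [← Finset.sum_sub_distrib]
      refine Finset.sum_congr rfl fun n hn => ?_
      simp only [map_mul, Complex.conj_I, map_neg, Complex.conj_ofReal]
      ring
    have hmainval : (∫ x₁ in (0:ℝ)..(2 * Real.pi), main x₁) = L := by
      rw [intervalIntegral.integral_congr (fun x _ => hmx x)]
      rw [intervalIntegral.integral_finset_sum]
      swap
      · intro m _
        apply Continuous.intervalIntegrable
        apply continuous_finset_sum
        intro n _
        refine continuous_const.mul ?_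
        refine (Complex.continuous_exp.comp ?_).mul
          (continuous_conj.comp (Complex.continuous_exp.comp ?_)) <;>
          exact continuous_const.mul
            ((continuous_const.mul Complex.continuous_ofReal).add continuous_const)
      rw [hL]
      refine Finset.sum_congr rfl fun m hm => ?_
      rw [intervalIntegral.integral_finset_sum]
      swap
      · intro n _
        refine Continuous.intervalIntegrable ?_ _ _
        refine continuous_const.mul ?_
        refine (Complex.continuous_exp.comp ?_).mul
          (continuous_conj.comp (Complex.continuous_exp.comp ?_)) <;>
          exact continuous_const.mul
            ((continuous_const.mul Complex.continuous_ofReal).add continuous_const)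
      have hterm : ∀ n ∈ M, (∫ x in (0:ℝ)..(2 * Real.pi),
          (a m * (starRingEnd ℂ) (a n) * (Complex.I * ((β m : ℂ) + (β n : ℂ)))) *
            (Complex.exp (Complex.I * ((((m : ℝ) + α : ℝ) : ℂ) * x + ((R * β m : ℝ) : ℂ)))
              * (starRingEnd ℂ) (Complex.exp (Complex.I *
                ((((n : ℝ) + α : ℝ) : ℂ) * x + ((R * β n : ℝ) : ℂ))))))
          = if m = n then (a m * (starRingEnd ℂ) (a n) *
              (Complex.I * ((β m : ℂ) + (β n : ℂ)))) * (2 * Real.pi : ℂ) else 0 := by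
        intro n _
        rw [intervalIntegral.integral_const_mul, prod_integral_aux α (R * β m) (R * β n) m n]
        by_cases h : m = n
        · subst h
          simp
        · simp [h]
      rw [Finset.sum_congr rfl hterm, Finset.sum_ite_eq M m
        (fun n => (a m * (starRingEnd ℂ) (a n) *
          (Complex.I * ((β m : ℂ) + (β n : ℂ)))) * (2 * Real.pi : ℂ)), if_pos hm]
      push_cast
      ring
    -- bound the error integral
    have heR0 : 0 < Real.exp (δ * (-R)) := Real.exp_pos _
    have heR1 : Real.exp (δ * (-R)) ≤ 1 :=
      Real.exp_le_one_iff.2 (by nlinarith)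
    have hGbound : ∀ x₁ : ℝ, ‖G x₁‖
        ≤ 2 * (A * C1 + A * k * C1 + C1 * C1) * Real.exp (δ * (-R)) := by
      intro x₁
      obtain ⟨hr1, hr2, -⟩ := hC x₁ (-R) hRT₀
      have hρ : ‖r x₁ (-R)‖ ≤ C1 * Real.exp (δ * (-R)) :=
        le_trans hr1 (mul_le_mul_of_nonneg_right (le_max_left _ _) heR0.le)
      have hρ' : ‖deriv (fun s : ℝ => r x₁ s) (-R)‖ ≤ C1 * Real.exp (δ * (-R)) :=
        le_trans hr2 (mul_le_mul_of_nonneg_right (le_max_left _ _) heR0.le)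
      have hu := hSbound x₁ (-R)
      have hu' := hS'bound x₁ (-R)
      rw [hG]
      have hstep : ∀ z₁ z₂ z₃ z₄ z₅ z₆ : ℂ,
          ‖z₁ + z₂ + z₃ - z₄ - z₅ - z₆‖ ≤ ‖z₁‖ + ‖z₂‖ + ‖z₃‖ + ‖z₄‖ + ‖z₅‖ + ‖z₆‖ := by
        intro z₁ z₂ z₃ z₄ z₅ z₆
        calc ‖z₁ + z₂ + z₃ - z₄ - z₅ - z₆‖
            ≤ ‖z₁ + z₂ + z₃ - z₄ - z₅‖ + ‖z₆‖ := norm_sub_le _ _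
          _ ≤ (‖z₁ + z₂ + z₃ - z₄‖ + ‖z₅‖) + ‖z₆‖ :=
              by gcongr; exact norm_sub_le _ _
          _ ≤ ((‖z₁ + z₂ + z₃‖ + ‖z₄‖) + ‖z₅‖) + ‖z₆‖ :=
              by gcongr; exact norm_sub_le _ _
          _ ≤ (((‖z₁ + z₂‖ + ‖z₃‖) + ‖z₄‖) + ‖z₅‖) + ‖z₆‖ := by
              gcongr; exact norm_add_le _ _
          _ ≤ ((((‖z₁‖ + ‖z₂‖) + ‖z₃‖) + ‖z₄‖) + ‖z₅‖) + ‖z₆‖ := by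
              gcongr; exact norm_add_le _ _
    
      refine le_trans (hstep _ _ _ _ _ _) ?_
      simp only [norm_mul, RCLike.norm_conj]
      have hk0 := hk.le
      nlinarith [norm_nonneg (r x₁ (-R)), norm_nonneg (deriv (fun s : ℝ => r x₁ s) (-R)),
        norm_nonneg (S x₁ (-R)), norm_nonneg (S' x₁ (-R)), heR0.le, heR1,
        mul_le_mul hu hρ' (norm_nonneg _) hA0,
        mul_le_mul hρ hρ' (norm_nonneg _) (mul_nonneg hC10 heR0.le),
        mul_le_mul hρ hu' (norm_nonneg _) (mul_nonneg hC10 heR0.le),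
        mul_le_mul_of_nonneg_left heR1 (mul_nonneg (mul_nonneg hC10 hC10) heR0.le)]
    have hGint : ‖∫ x₁ in (0:ℝ)..(2 * Real.pi), G x₁‖ ≤ K * Real.exp (δ * (-R)) := by
      have h1 : ‖∫ x₁ in (0:ℝ)..(2 * Real.pi), G x₁‖
          ≤ (2 * (A * C1 + A * k * C1 + C1 * C1) * Real.exp (δ * (-R))) * |2 * Real.pi - 0| :=
        intervalIntegral.norm_integral_le_of_norm_le_const fun x _ => hGbound x
      have h2 : |2 * Real.pi - 0| = 2 * Real.pi := by
        rw [sub_zero]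
        exact abs_of_pos (by positivity)
      rw [h2] at h1
      rw [hK]
      calc ‖∫ x₁ in (0:ℝ)..(2 * Real.pi), G x₁‖
          ≤ _ := h1
        _ = 2 * Real.pi * (2 * (A * C1 + A * k * C1 + C1 * C1)) * Real.exp (δ * (-R)) := by
            ring
    rw [hsplitint, hmainval]
    simpa using hGint
  -- conclude the limit is L
  have hexp_tendsto : Tendsto (fun R : ℝ => K * Real.exp (δ * (-R))) atTop (nhds 0) := by
    have h1 : Tendsto (fun R : ℝ => δ * (-R)) atTop atBot := by
      exact Tendsto.const_mul_atBot hδ tendsto_neg_atTop_atBot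
    simpa using (Real.tendsto_exp_atBot.comp h1).const_mul K
  have hFtendsto : Tendsto (fun R : ℝ =>
      ∫ x₁ in (0:ℝ)..(2 * Real.pi),
        (w x₁ (-R) * (starRingEnd ℂ) (deriv (fun s : ℝ => w x₁ s) (-R))
          - (starRingEnd ℂ) (w x₁ (-R)) * deriv (fun s : ℝ => w x₁ s) (-R)))
      atTop (nhds L) := by
    have hsub : Tendsto (fun R : ℝ =>
        (∫ x₁ in (0:ℝ)..(2 * Real.pi),
          (w x₁ (-R) * (starRingEnd ℂ) (deriv (fun s : ℝ => w x₁ s) (-R))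
            - (starRingEnd ℂ) (w x₁ (-R)) * deriv (fun s : ℝ => w x₁ s) (-R))) - L)
        atTop (nhds 0) := by
      apply squeeze_zero_norm' _ hexp_tendsto
      filter_upwards [eventually_gt_atTop T₀, eventually_gt_atTop (-T), eventually_ge_atTop 0]
        with R h1 h2 h3
      exact hmainclaim R h1 h2 h3
    have := hsub.add (tendsto_const_nhds (x := L))
    simpa using this
  have hL0 : L = 0 := tendsto_nhds_unique hFtendsto hflux
  -- extract vanishing of the coefficients
  have hLsum : L = (4 * Real.pi * Complex.I) *
      ((∑ m ∈ M, Complex.normSq (a m) * β m : ℝ) : ℂ) := by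
    rw [hL]
    push_cast
    rw [Finset.mul_sum]
    refine Finset.sum_congr rfl fun m _ => ?_
    rw [Complex.mul_conj]
    push_cast
    ring
  have hsum0 : (∑ m ∈ M, Complex.normSq (a m) * β m : ℝ) = 0 := by
    have h4 : (4 * Real.pi * Complex.I : ℂ) ≠ 0 := by
      simp [Complex.I_ne_zero, Real.pi_ne_zero]
    have := hL0
    rw [hLsum] at this
    have := (mul_eq_zero.1 this).resolve_left h4
    exact_mod_cast this
  intro m hm
  have hterm : Complex.normSq (a m) * β m = 0 := by
    have hnn : ∀ i ∈ M, 0 ≤ Complex.normSq (a i) * β i :=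
      fun i _ => mul_nonneg (Complex.normSq_nonneg _) (hβnonneg i)
    exact (Finset.sum_eq_zero_iff_of_nonneg hnn).1 hsum0 m hm
  have : Complex.normSq (a m) = 0 := by
    rcases mul_eq_zero.1 hterm with h | h
    · exact h
    · exact absurd h (ne_of_gt (hβpos m hm))
  exact Complex.normSq_eq_zero.1 this
end
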